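/- arXiv:1310.2498 — 5 statements merged into one kernel-verified Lean document; each statement's English description precedes it below -/
import Mathlib

section
/- Let h>0 and u \in L^\infty_{loc}([0,\infty)^d) be Pareto-monotone with u=0 on \Gamma_h. Suppose for some z \in (h\mathbf{1},\infty) the support of the map x \mapsto S(h,x,u) is contained in [0,z]. Then u(x) = u(\pi_z(x)) for all x \in [0,\infty)^d, where \pi_z(x) = (\min(x_1,z_1),\dots,\min(x_d,z_d)). -/
open Finset

/-- Backward-difference scheme operator. -/
noncomputable def Sh {d : ℕ} (h : ℝ) (x : Fin d → ℝ) (u : (Fin d → ℝ) → ℝ) : ℝ :=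
  ∏ i : Fin d, (u x - u (Function.update x i (x i - h))) / h

/-- Boundary condition at infinity: `u = u ∘ π_z` when the scheme's right-hand side is
supported in `[0,z]`. -/
theorem stmt1 {d : ℕ} (h : ℝ) (hh : 0 < h)
    (u : (Fin d → ℝ) → ℝ)
    (hu_mono : MonotoneOn u {x | ∀ i, 0 ≤ x i})
    (hu_loc : ∀ R : ℝ, ∃ M, ∀ x : Fin d → ℝ, (∀ i, 0 ≤ x i ∧ x i ≤ R) → |u x| ≤ M)
    (hbdry : ∀ x : Fin d → ℝ, (∀ i, 0 ≤ x i) → (¬ ∀ i, h < x i) → u x = 0)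
    (z : Fin d → ℝ) (hz : ∀ i, h < z i)
    (hsupp : ∀ x : Fin d → ℝ, (∀ i, 0 ≤ x i) → Sh h x u ≠ 0 → ∀ i, 0 ≤ x i ∧ x i ≤ z i) :
    ∀ x : Fin d → ℝ, (∀ i, 0 ≤ x i) → u x = u (fun i => min (x i) (z i)) := by
  rcases Nat.eq_zero_or_pos d with hd | hd
  · subst hd
    intro x _
    congr 1
    funext i
    exact i.elim0
  -- main claim by induction on n with ∑ x i ≤ n * h
  have key : ∀ n : ℕ, ∀ x : Fin d → ℝ, (∀ i, 0 ≤ x i) → (∑ i, x i) ≤ n * h →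
      u x = u (fun i => min (x i) (z i)) := by
    intro n
    induction n with
    | zero =>
      intro x hx hsum
      have hxall : ∀ i, x i = 0 := by
        intro i
        have h1 : ∑ j, x j = 0 := le_antisymm (by simpa using hsum)
          (Finset.sum_nonneg fun j _ => hx j)
        have := (Finset.sum_eq_zero_iff_of_nonneg (fun j _ => hx j)).mp h1 i (mem_univ i)
        exact this
      have h0 : u x = 0 := by
        apply hbdry x hx
        intro hall
        obtain ⟨i0⟩ : Nonempty (Fin d) := Fin.pos_iff_nonempty.mp hd
        have := hall i0
        rw [hxall i0] at this
        linarith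
      have h0' : u (fun i => min (x i) (z i)) = 0 := by
        apply hbdry _ (fun i => le_min (hx i) (le_of_lt (lt_trans hh (hz i))))
        intro hall
        obtain ⟨i0⟩ : Nonempty (Fin d) := Fin.pos_iff_nonempty.mp hd
        have := hall i0
        have h2 : min (x i0) (z i0) ≤ x i0 := min_le_left _ _
        have h3 := hxall i0
        have h4 : h < min (x i0) (z i0) := this
        linarith
      rw [h0, h0']
    | succ m ih =>
      intro x hx hsum
      by_cases hsmall : ∃ i, x i ≤ h
      · obtain ⟨i0, hi0⟩ := hsmall
        have h0 : u x = 0 := hbdry x hx (fun hall => absurd (hall i0) (not_lt.mpr hi0))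
        have h0' : u (fun i => min (x i) (z i)) = 0 := by
          apply hbdry _ (fun i => le_min (hx i) (le_of_lt (lt_trans hh (hz i))))
          intro hall
          exact absurd (hall i0) (not_lt.mpr (le_trans (min_le_left _ _) hi0))
        rw [h0, h0']
      · push_neg at hsmall
        by_cases hin : ∀ i, x i ≤ z i
        · congr 1
          funext i
          exact (min_eq_left (hin i)).symm
        · push_neg at hin
          obtain ⟨j, hj⟩ := hin
          have hS : Sh h x u = 0 := by
            by_contra hne
            exact absurd ((hsupp x hx hne j).2) (not_le.mpr hj)
          rw [Sh, Finset.prod_eq_zero_iff] at hS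
          obtain ⟨i0, _, hfac⟩ := hS
          have hux : u x = u (Function.update x i0 (x i0 - h)) := by
            rcases div_eq_zero_iff.mp hfac with h1 | h1
            · linarith [sub_eq_zero.mp h1]
            · exact absurd h1 (ne_of_gt hh)
          set y := Function.update x i0 (x i0 - h) with hy
          have hy_nonneg : ∀ i, 0 ≤ y i := by
            intro i
            by_cases hi : i = i0
            · subst hi; rw [hy, Function.update_self]; linarith [hsmall i]
            · rw [hy, Function.update_of_ne hi]; exact hx i
          have hy_le : ∀ i, y i ≤ x i := by
            intro i
            by_cases hi : i = i0
            · subst hi; rw [hy, Function.update_self]; linarith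
            · rw [hy, Function.update_of_ne hi]
          have hy_sum : ∑ i, y i = (∑ i, x i) - h := by
            rw [hy, Finset.sum_update_of_mem (mem_univ i0)]
            have : ∑ i, x i = x i0 + ∑ i ∈ univ \ {i0}, x i := by
              rw [Finset.sum_eq_sum_sdiff_singleton_add (mem_univ i0)]
              ring
            rw [this]; ring
          have hih := ih y hy_nonneg (by rw [hy_sum]; have hs := hsum; push_cast at hs; linarith)
          -- sandwich
          have hπx_mem : (fun i => min (x i) (z i)) ∈ {x : Fin d → ℝ | ∀ i, 0 ≤ x i} :=
            fun i => le_min (hx i) (le_of_lt (lt_trans hh (hz i)))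
          have hπy_mem : (fun i => min (y i) (z i)) ∈ {x : Fin d → ℝ | ∀ i, 0 ≤ x i} :=
            fun i => le_min (hy_nonneg i) (le_of_lt (lt_trans hh (hz i)))
          have hx_mem : x ∈ {x : Fin d → ℝ | ∀ i, 0 ≤ x i} := hx
          have h1 : u (fun i => min (y i) (z i)) ≤ u (fun i => min (x i) (z i)) :=
            hu_mono hπy_mem hπx_mem (fun i => min_le_min (hy_le i) le_rfl)
          have h2 : u (fun i => min (x i) (z i)) ≤ u x :=
            hu_mono hπx_mem hx_mem (fun i => min_le_left _ _)
          have h3 : u x = u (fun i => min (y i) (z i)) := by rw [hux, hih]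
          linarith
  intro x hx
  refine key ⌈(∑ i, x i) / h⌉₊ x hx ?_
  have h1 : (∑ i, x i) / h ≤ ⌈(∑ i, x i) / h⌉₊ := Nat.le_ceil _
  rw [div_le_iff₀ hh] at h1
  exact h1
end

section
/- Let h>0 and u \in L^\infty_{loc}([0,\infty)^d) be Pareto-monotone with u=0 on \Gamma_h. Then for any R>0 and all x,y \in (h,R]^d, |u(x)-u(y)| \le 2 d^2 R^{(d-1)/d} \|S(h,\cdot,u)\|_{L^\infty((h,R]^d)}^{1/d} (|x-y|^{1/d} + h^{1/d}). -/
open Finset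

section Aux

variable {d : ℕ} {h R M : ℝ} {u : (Fin d → ℝ) → ℝ}

lemma rpow_subadd {t s p : ℝ} (ht : 0 ≤ t) (hs : 0 ≤ s) (hp : 0 ≤ p) (hp1 : p ≤ 1) :
    (t + s) ^ p ≤ t ^ p + s ^ p := by
  have key := NNReal.rpow_add_le_add_rpow t.toNNReal s.toNNReal hp hp1
  have key2 := NNReal.coe_le_coe.mpr key
  rw [← Real.toNNReal_add ht hs] at key2
  push_cast [NNReal.coe_rpow] at key2
  rwa [Real.coe_toNNReal _ (by linarith), Real.coe_toNNReal _ ht,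
    Real.coe_toNNReal _ hs] at key2

lemma upos (hh : 0 < h)
    (hu_mono : MonotoneOn u {x | ∀ i, 0 ≤ x i})
    (hbdry : ∀ x : Fin d → ℝ, (∀ i, 0 ≤ x i) → (¬ ∀ i, h < x i) → u x = 0)
    (i : Fin d) (v : Fin d → ℝ) (hv : ∀ j, 0 ≤ v j) : 0 ≤ u v := by
  set q := Function.update v i 0 with hqdef
  have hq0 : ∀ j, 0 ≤ q j := by
    intro j
    rcases eq_or_ne j i with rfl | hj
    · simp [hqdef]
    · rw [hqdef, Function.update_of_ne hj]; exact hv j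
  have hqz : u q = 0 := by
    apply hbdry q hq0
    intro hall
    have := hall i
    rw [hqdef, Function.update_self] at this
    linarith
  have hle : q ≤ v := by
    intro j
    rcases eq_or_ne j i with rfl | hj
    · rw [hqdef, Function.update_self]; exact hv j
    · rw [hqdef, Function.update_of_ne hj]
  calc (0:ℝ) = u q := hqz.symm
    _ ≤ u v := hu_mono hq0 hv hle

lemma prod_le_Mhd (hh : 0 < h)
    (hMbound : ∀ x : Fin d → ℝ, (∀ i, h < x i ∧ x i ≤ R) → |Sh h x u| ≤ M)
    (v : Fin d → ℝ) (hv : ∀ j, h < v j ∧ v j ≤ R) :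
    ∏ j, (u v - u (Function.update v j (v j - h))) ≤ M * h ^ d := by
  have h1 : Sh h v u ≤ M := (abs_le.mp (hMbound v hv)).2
  have h2 : Sh h v u = (∏ j, (u v - u (Function.update v j (v j - h)))) / h ^ d := by
    rw [Sh, Finset.prod_div_distrib]
    simp [Finset.prod_const, Finset.card_univ]
  rw [h2, div_le_iff₀ (by positivity)] at h1
  linarith

lemma dich (hh : 0 < h)
    (hMbound : ∀ x : Fin d → ℝ, (∀ i, h < x i ∧ x i ≤ R) → |Sh h x u| ≤ M)
    (lam mu : ℝ) (hlam : 0 ≤ lam) (hmu : 0 ≤ mu)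
    (hkey : lam * mu ^ (d - 1) = M * h ^ d)
    (i : Fin d) (v : Fin d → ℝ) (hv : ∀ j, h < v j ∧ v j ≤ R) :
    u v - u (Function.update v i (v i - h)) ≤ lam ∨
      ∃ j, j ≠ i ∧ u v - u (Function.update v j (v j - h)) ≤ mu := by
  by_contra hcon
  push_neg at hcon
  obtain ⟨h1, h2⟩ := hcon
  set f : Fin d → ℝ := fun j => u v - u (Function.update v j (v j - h)) with hf
  set g : Fin d → ℝ := fun j => if j = i then lam else mu with hg
  have hglt : ∀ j, g j < f j := by
    intro j
    rcases eq_or_ne j i with rfl | hj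
    · simpa [hg] using h1
    · simpa [hg, hj] using h2 j hj
  have hgnn : ∀ j, 0 ≤ g j := by
    intro j
    rcases eq_or_ne j i with rfl | hj
    · simpa [hg] using hlam
    · simpa [hg, hj] using hmu
  have hprodg : ∏ j, g j = lam * mu ^ (d - 1) := by
    rw [← Finset.mul_prod_erase Finset.univ g (Finset.mem_univ i)]
    have h1 : ∏ j ∈ Finset.univ.erase i, g j = ∏ _j ∈ Finset.univ.erase i, mu := by
      apply Finset.prod_congr rfl
      intro j hj
      simp [hg, (Finset.mem_erase.mp hj).1]
    rw [h1, Finset.prod_const, Finset.card_erase_of_mem (Finset.mem_univ i)]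
    simp [hg]
  have hfle : ∏ j, f j ≤ M * h ^ d := prod_le_Mhd hh hMbound v hv
  have hfpos : (0:ℝ) < ∏ j, f j :=
    Finset.prod_pos (fun j _ => lt_of_le_of_lt (hgnn j) (hglt j))
  rcases eq_or_ne (lam * mu ^ (d - 1)) 0 with hz | hz
  · rw [hz] at hkey
    linarith [hkey ▸ hfle]
  · have hgpos : ∀ j ∈ Finset.univ, 0 < g j := by
      intro j _
      rcases (hgnn j).lt_or_eq with hp | hp
      · exact hp
      · exfalso
        apply hz
        rw [← hprodg]
        exact Finset.prod_eq_zero (Finset.mem_univ j) hp.symm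
    have := Finset.prod_lt_prod_of_nonempty hgpos (fun j _ => hglt j)
      ⟨i, Finset.mem_univ i⟩
    rw [hprodg] at this
    linarith [hkey ▸ hfle]

lemma path (hh : 0 < h)
    (hu_mono : MonotoneOn u {x | ∀ i, 0 ≤ x i})
    (hbdry : ∀ x : Fin d → ℝ, (∀ i, 0 ≤ x i) → (¬ ∀ i, h < x i) → u x = 0)
    (i : Fin d) (w : Fin d → ℝ) (hw : ∀ j, h < w j ∧ w j ≤ R)
    (t : ℝ) (hti : h < w i - t)
    (lam mu : ℝ) (hlam : 0 ≤ lam) (hmu : 0 ≤ mu)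
    (hdich : ∀ v : Fin d → ℝ, (∀ j, h < v j ∧ v j ≤ R) →
      u v - u (Function.update v i (v i - h)) ≤ lam ∨
        ∃ j, j ≠ i ∧ u v - u (Function.update v j (v j - h)) ≤ mu) :
    ∀ N a b : ℕ, a + b ≤ N → ∀ v : Fin d → ℝ,
      (∀ j, 0 ≤ v j) → (∀ j, v j ≤ R) → (∀ j, v j ≤ w j) →
      v i ≤ (w i - t) + a * h →
      (∑ j ∈ Finset.univ.erase i, (v j - h)) ≤ b * h →
      u v ≤ u (Function.update w i (w i - t)) + lam * a + mu * b := by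
  have hB : 0 ≤ u (Function.update w i (w i - t)) := by
    apply upos hh hu_mono hbdry i
    intro j
    rcases eq_or_ne j i with rfl | hj
    · rw [Function.update_self]; linarith
    · rw [Function.update_of_ne hj]; linarith [(hw j).1]
  have hend : ∀ v : Fin d → ℝ, (∀ j, 0 ≤ v j) → (∀ j, v j ≤ w j) →
      ((¬ ∀ j, h < v j) ∨ v i ≤ w i - t) → u v ≤ u (Function.update w i (w i - t)) := by
    intro v hv0 hvw hc
    rcases hc with hc | hc
    · rw [hbdry v hv0 hc]; exact hB
    · apply hu_mono hv0
      · intro j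
        rcases eq_or_ne j i with rfl | hj
        · rw [Function.update_self]; linarith
        · rw [Function.update_of_ne hj]; linarith [(hw j).1]
      · intro j
        rcases eq_or_ne j i with rfl | hj
        · rw [Function.update_self]; exact hc
        · rw [Function.update_of_ne hj]; exact hvw j
  intro N
  induction N with
  | zero =>
    intro a b hab v hv0 hvR hvw hv4 hv5
    have ha : a = 0 := by omega
    have hb : b = 0 := by omega
    subst ha; subst hb
    by_cases hc : v i ≤ w i - t
    · have := hend v hv0 hvw (Or.inr hc)
      push_cast; linarith
    · exfalso
      push_cast at hv4
      linarith
  | succ N ih =>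
    intro a b hab v hv0 hvR hvw hv4 hv5
    by_cases hc : v i ≤ w i - t
    · have := hend v hv0 hvw (Or.inr hc)
      have hpos : (0:ℝ) ≤ lam * a + mu * b := by positivity
      linarith
    by_cases hall : ∀ j, h < v j
    swap
    · have := hend v hv0 hvw (Or.inl hall)
      have hpos : (0:ℝ) ≤ lam * a + mu * b := by positivity
      linarith
    push_neg at hc
    have hvalid : ∀ j, h < v j ∧ v j ≤ R := fun j => ⟨hall j, hvR j⟩
    rcases hdich v hvalid with hd1 | ⟨j0, hj0i, hd2⟩
    · -- step in direction i
      have hane : a ≠ 0 := by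
        rintro rfl
        push_cast at hv4
        linarith
      obtain ⟨a', rfl⟩ : ∃ a', a = a' + 1 := ⟨a - 1, by omega⟩
      set v' := Function.update v i (v i - h) with hv'
      have hstep := ih a' b (by omega) v'
        (by
          intro j
          rcases eq_or_ne j i with rfl | hj
          · rw [hv', Function.update_self]; linarith [hall j]
          · rw [hv', Function.update_of_ne hj]; exact hv0 j)
        (by
          intro j
          rcases eq_or_ne j i with rfl | hj
          · rw [hv', Function.update_self]; linarith [hvR j]
          · rw [hv', Function.update_of_ne hj]; exact hvR j)
        (by
          intro j
          rcases eq_or_ne j i with rfl | hj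
          · rw [hv', Function.update_self]; linarith [hvw j]
          · rw [hv', Function.update_of_ne hj]; exact hvw j)
        (by
          rw [hv', Function.update_self]
          push_cast at hv4 ⊢
          linarith)
        (by
          rw [Finset.sum_congr rfl (fun j hj => by
            rw [hv', Function.update_of_ne (Finset.mem_erase.mp hj).1])]
          exact hv5)
      push_cast at hstep ⊢
      linarith
    · -- step in direction j0
      have hj0mem : j0 ∈ Finset.univ.erase i := Finset.mem_erase.mpr ⟨hj0i, Finset.mem_univ j0⟩
      have hsumpos : 0 < ∑ j ∈ Finset.univ.erase i, (v j - h) := by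
        have h1 : v j0 - h ≤ ∑ j ∈ Finset.univ.erase i, (v j - h) :=
          Finset.single_le_sum (f := fun j => v j - h)
            (fun j _ => show (0:ℝ) ≤ v j - h by linarith [hall j]) hj0mem
        linarith [hall j0]
      have hbne : b ≠ 0 := by
        rintro rfl
        push_cast at hv5
        linarith
      obtain ⟨b', rfl⟩ : ∃ b', b = b' + 1 := ⟨b - 1, by omega⟩
      set v' := Function.update v j0 (v j0 - h) with hv'
      have hsum' : ∑ j ∈ Finset.univ.erase i, (v' j - h)
          = (∑ j ∈ Finset.univ.erase i, (v j - h)) - h := by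
        rw [← Finset.add_sum_erase _ (fun j => v' j - h) hj0mem,
          ← Finset.add_sum_erase _ (fun j => v j - h) hj0mem]
        have e1 : ∑ j ∈ (Finset.univ.erase i).erase j0, (v' j - h)
            = ∑ j ∈ (Finset.univ.erase i).erase j0, (v j - h) := by
          apply Finset.sum_congr rfl
          intro j hj
          rw [hv', Function.update_of_ne (Finset.mem_erase.mp hj).1]
        rw [e1, hv', Function.update_self]
        ring
      have hstep := ih a b' (by omega) v'
        (by
          intro j
          rcases eq_or_ne j j0 with rfl | hj
          · rw [hv', Function.update_self]; linarith [hall j]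
          · rw [hv', Function.update_of_ne hj]; exact hv0 j)
        (by
          intro j
          rcases eq_or_ne j j0 with rfl | hj
          · rw [hv', Function.update_self]; linarith [hvR j]
          · rw [hv', Function.update_of_ne hj]; exact hvR j)
        (by
          intro j
          rcases eq_or_ne j j0 with rfl | hj
          · rw [hv', Function.update_self]; linarith [hvw j]
          · rw [hv', Function.update_of_ne hj]; exact hvw j)
        (by
          rw [hv', Function.update_of_ne (Ne.symm hj0i)]
          exact hv4)
        (by
          rw [hsum']
          push_cast at hv5 ⊢
          linarith)
      push_cast at hstep ⊢
      linarith


lemma coord_bound (hh : 0 < h) (hR : 0 < R) (hM : 0 ≤ M)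
    (hu_mono : MonotoneOn u {x | ∀ i, 0 ≤ x i})
    (hbdry : ∀ x : Fin d → ℝ, (∀ i, 0 ≤ x i) → (¬ ∀ i, h < x i) → u x = 0)
    (hMbound : ∀ x : Fin d → ℝ, (∀ i, h < x i ∧ x i ≤ R) → |Sh h x u| ≤ M)
    (i : Fin d) (w : Fin d → ℝ) (hw : ∀ j, h < w j ∧ w j ≤ R)
    (t : ℝ) (ht : 0 ≤ t) (hti : h < w i - t) :
    u w - u (Function.update w i (w i - t)) ≤
      2 * (d : ℝ) * R ^ (((d : ℝ) - 1) / d) * M ^ ((1 : ℝ) / d) *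
        (t ^ ((1 : ℝ) / d) + h ^ ((1 : ℝ) / d)) := by
  have hd1 : 1 ≤ d := i.pos
  have hdR : (1 : ℝ) ≤ (d : ℝ) := by exact_mod_cast hd1
  have hd0 : (d : ℝ) ≠ 0 := by positivity
  have hhR : h < R := lt_of_lt_of_le (hw i).1 (hw i).2
  set P : ℝ := t + h with hP
  have hPpos : 0 < P := by positivity
  set Q : ℝ := (d : ℝ) * R with hQ
  have hQpos : 0 < Q := by positivity
  set e : ℝ := ((d : ℝ) - 1) / d with he
  clear_value P Q e
  set A : ℝ := M ^ ((1 : ℝ) / d) with hA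
  have hA0 : 0 ≤ A := Real.rpow_nonneg hM _
  set lam : ℝ := A * h * Q ^ e * P ^ ((1 : ℝ) / d - 1) with hlam
  set mu : ℝ := A * h * P ^ ((1 : ℝ) / d) * Q ^ (-((1 : ℝ) / d)) with hmu
  have hlam0 : 0 ≤ lam := by positivity
  have hmu0 : 0 ≤ mu := by positivity
  clear_value A lam mu
  have hc : ((d - 1 : ℕ) : ℝ) = (d : ℝ) - 1 := by
    push_cast [Nat.cast_sub hd1]; ring
  -- key identity : lam * mu ^ (d-1) = M * h ^ d
  have hkey : lam * mu ^ (d - 1) = M * h ^ d := by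
    have hmupow : mu ^ (d - 1)
        = A ^ (d - 1) * h ^ (d - 1) * P ^ (((1:ℝ)/d) * ((d:ℝ) - 1))
          * Q ^ ((-((1:ℝ)/d)) * ((d:ℝ) - 1)) := by
      rw [hmu, mul_pow, mul_pow, mul_pow,
        ← Real.rpow_natCast (P ^ ((1:ℝ)/d)) (d-1), ← Real.rpow_mul hPpos.le,
        ← Real.rpow_natCast (Q ^ (-((1:ℝ)/d))) (d-1), ← Real.rpow_mul hQpos.le, hc]
    rw [hmupow, hlam]
    have hQQ : Q ^ e * Q ^ ((-((1:ℝ)/d)) * ((d:ℝ) - 1)) = 1 := by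
      rw [← Real.rpow_add hQpos]
      have : e + (-((1:ℝ)/d)) * ((d:ℝ) - 1) = 0 := by
        rw [he]; field_simp; ring
      rw [this, Real.rpow_zero]
    have hPP : P ^ ((1:ℝ)/d - 1) * P ^ (((1:ℝ)/d) * ((d:ℝ) - 1)) = 1 := by
      rw [← Real.rpow_add hPpos]
      have : ((1:ℝ)/d - 1) + ((1:ℝ)/d) * ((d:ℝ) - 1) = 0 := by field_simp; ring
      rw [this, Real.rpow_zero]
    have hAd : A * A ^ (d - 1) = M := by
      have h1 : A * A ^ (d - 1) = A ^ d := by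
        rw [← pow_succ']
        congr 1
        omega
      rw [h1, hA, ← Real.rpow_natCast (M ^ ((1:ℝ)/d)) d, ← Real.rpow_mul hM]
      rw [show (1:ℝ)/d * d = 1 by field_simp, Real.rpow_one]
    have hhd : h * h ^ (d - 1) = h ^ d := by
      rw [← pow_succ']
      congr 1
      omega
    calc A * h * Q ^ e * P ^ ((1:ℝ)/d - 1)
          * (A ^ (d-1) * h ^ (d-1) * P ^ (((1:ℝ)/d) * ((d:ℝ)-1)) * Q ^ ((-((1:ℝ)/d)) * ((d:ℝ)-1)))
        = (A * A ^ (d-1)) * (h * h ^ (d-1))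
          * (Q ^ e * Q ^ ((-((1:ℝ)/d)) * ((d:ℝ)-1)))
          * (P ^ ((1:ℝ)/d - 1) * P ^ (((1:ℝ)/d) * ((d:ℝ)-1))) := by ring
      _ = M * h ^ d := by rw [hQQ, hPP, hAd, hhd]; ring
  -- budgets
  set a : ℕ := ⌈t / h⌉₊ with ha
  set b : ℕ := ⌈((d:ℝ) - 1) * (R - h) / h⌉₊ with hb
  clear_value a b
  have hpath := path hh hu_mono hbdry i w hw t hti lam mu hlam0 hmu0
    (fun v hv => dich hh hMbound lam mu hlam0 hmu0 hkey i v hv)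
    (a + b) a b le_rfl w
    (fun j => by linarith [(hw j).1])
    (fun j => (hw j).2)
    (fun j => le_rfl)
    (by
      rw [ha]
      have := Nat.le_ceil (t / h)
      rw [div_le_iff₀ hh] at this
      linarith)
    (by
      rw [hb]
      have h1 : ∑ j ∈ Finset.univ.erase i, (w j - h)
          ≤ ((d:ℝ) - 1) * (R - h) := by
        have := Finset.sum_le_card_nsmul (Finset.univ.erase i) (fun j => w j - h) (R - h)
          (fun j _ => show w j - h ≤ R - h by linarith [(hw j).2])
        rw [Finset.card_erase_of_mem (Finset.mem_univ i)] at this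
        simp only [nsmul_eq_mul, Finset.card_univ, Fintype.card_fin] at this
        rw [hc] at this
        exact this
      have h2 := Nat.le_ceil (((d:ℝ) - 1) * (R - h) / h)
      rw [div_le_iff₀ hh] at h2
      linarith)
  -- bound lam * a + mu * b
  have haR : (a : ℝ) ≤ P / h := by
    have h1 : (0:ℝ) ≤ t / h := by positivity
    have := Nat.ceil_lt_add_one h1
    have h2 : t / h + 1 = P / h := by rw [hP]; field_simp
    rw [ha]
    linarith
  have hbR : (b : ℝ) ≤ Q / h := by
    have h1 : (0:ℝ) ≤ ((d:ℝ) - 1) * (R - h) / h := by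
      apply div_nonneg _ hh.le
      apply mul_nonneg (by linarith) (by linarith)
    have h2 := Nat.ceil_lt_add_one h1
    have h3 : ((d:ℝ) - 1) * (R - h) / h + 1 ≤ Q / h := by
      rw [div_add' _ _ _ hh.ne', div_le_div_iff₀ hh hh]
      have h4 : (2 - (d:ℝ)) * h ≤ h := by nlinarith
      rw [hQ]
      nlinarith
    rw [hb]
    linarith
  have hlamA : lam * (P / h) = A * Q ^ e * P ^ ((1:ℝ)/d) := by
    have hPP : P ^ ((1:ℝ)/d - 1) * P = P ^ ((1:ℝ)/d) := by
      nth_rewrite 2 [← Real.rpow_one P]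
      rw [← Real.rpow_add hPpos]
      norm_num
    calc lam * (P / h)
        = A * Q ^ e * (P ^ ((1:ℝ)/d - 1) * P) * (h / h) := by rw [hlam]; ring
      _ = A * Q ^ e * P ^ ((1:ℝ)/d) := by rw [hPP, div_self hh.ne']; ring
  have hmuA : mu * (Q / h) = A * Q ^ e * P ^ ((1:ℝ)/d) := by
    have hQQ : Q ^ (-((1:ℝ)/d)) * Q = Q ^ e := by
      nth_rewrite 2 [← Real.rpow_one Q]
      rw [← Real.rpow_add hQpos, he]
      congr 1
      field_simp
      ring
    calc mu * (Q / h)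
        = A * P ^ ((1:ℝ)/d) * (Q ^ (-((1:ℝ)/d)) * Q) * (h / h) := by rw [hmu]; ring
      _ = A * Q ^ e * P ^ ((1:ℝ)/d) := by rw [hQQ, div_self hh.ne']; ring
  have hstep1 : u w - u (Function.update w i (w i - t)) ≤ 2 * (A * Q ^ e * P ^ ((1:ℝ)/d)) := by
    have h1 : lam * (a:ℝ) ≤ lam * (P / h) := mul_le_mul_of_nonneg_left haR hlam0
    have h2 : mu * (b:ℝ) ≤ mu * (Q / h) := mul_le_mul_of_nonneg_left hbR hmu0
    rw [hlamA] at h1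
    rw [hmuA] at h2
    linarith
  -- final numeric comparison
  have hQe : Q ^ e ≤ (d:ℝ) * R ^ e := by
    rw [hQ, Real.mul_rpow (by positivity) hR.le]
    have h1 : (d:ℝ) ^ e ≤ (d:ℝ) ^ (1:ℝ) := by
      apply Real.rpow_le_rpow_of_exponent_le hdR
      rw [he, div_le_one (by positivity)]
      linarith
    rw [Real.rpow_one] at h1
    have h2 : (0:ℝ) ≤ R ^ e := Real.rpow_nonneg hR.le _
    exact mul_le_mul_of_nonneg_right h1 h2
  have hPsub : P ^ ((1:ℝ)/d) ≤ t ^ ((1:ℝ)/d) + h ^ ((1:ℝ)/d) := by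
    rw [hP]
    apply rpow_subadd ht hh.le (by positivity)
    rw [div_le_one (by positivity)]
    exact hdR
  have hfin : 2 * (A * Q ^ e * P ^ ((1:ℝ)/d))
      ≤ 2 * (A * ((d:ℝ) * R ^ e) * (t ^ ((1:ℝ)/d) + h ^ ((1:ℝ)/d))) := by
    have hq0 : 0 ≤ Q ^ e := Real.rpow_nonneg hQpos.le _
    have hp0 : 0 ≤ P ^ ((1:ℝ)/d) := Real.rpow_nonneg hPpos.le _
    have h1 : A * Q ^ e * P ^ ((1:ℝ)/d) ≤ A * ((d:ℝ) * R ^ e) * P ^ ((1:ℝ)/d) := by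
      apply mul_le_mul_of_nonneg_right _ hp0
      exact mul_le_mul_of_nonneg_left hQe hA0
    have h2 : A * ((d:ℝ) * R ^ e) * P ^ ((1:ℝ)/d)
        ≤ A * ((d:ℝ) * R ^ e) * (t ^ ((1:ℝ)/d) + h ^ ((1:ℝ)/d)) := by
      apply mul_le_mul_of_nonneg_left hPsub
      positivity
    linarith
  calc u w - u (Function.update w i (w i - t))
      ≤ 2 * (A * Q ^ e * P ^ ((1:ℝ)/d)) := hstep1
    _ ≤ 2 * (A * ((d:ℝ) * R ^ e) * (t ^ ((1:ℝ)/d) + h ^ ((1:ℝ)/d))) := hfin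
    _ = 2 * (d:ℝ) * R ^ e * A * (t ^ ((1:ℝ)/d) + h ^ ((1:ℝ)/d)) := by ring

lemma onesided (hh : 0 < h)
    (hu_mono : MonotoneOn u {x | ∀ i, 0 ≤ x i})
    (hbdry : ∀ x : Fin d → ℝ, (∀ i, 0 ≤ x i) → (¬ ∀ i, h < x i) → u x = 0)
    (hR : 0 < R) (hM : 0 ≤ M)
    (hMbound : ∀ x : Fin d → ℝ, (∀ i, h < x i ∧ x i ≤ R) → |Sh h x u| ≤ M) :
    ∀ x y : Fin d → ℝ, (∀ i, h < x i ∧ x i ≤ R) → (∀ i, h < y i ∧ y i ≤ R) →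
      u x - u y ≤ 2 * (d : ℝ)^2 * R ^ (((d : ℝ) - 1) / d) * M ^ ((1 : ℝ) / d) *
        ((Real.sqrt (∑ i, (x i - y i)^2)) ^ ((1 : ℝ) / d) + h ^ ((1 : ℝ) / d)) := by
  intro x y hx hy
  rcases Nat.eq_zero_or_pos d with hd0 | hd
  · subst hd0
    have hxy : x = y := funext fun j => j.elim0
    subst hxy
    norm_num
  set T := Real.sqrt (∑ i, (x i - y i)^2) with hT
  have hT0 : 0 ≤ T := Real.sqrt_nonneg _
  set C := 2 * (d:ℝ) * R ^ (((d:ℝ) - 1) / d) * M ^ ((1:ℝ)/d)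
    * (T ^ ((1:ℝ)/d) + h ^ ((1:ℝ)/d)) with hC
  set z : Fin d → ℝ := fun j => min (x j) (y j) with hz
  have hz' : ∀ j, h < z j ∧ z j ≤ R := fun j =>
    ⟨lt_min (hx j).1 (hy j).1, le_trans (min_le_left _ _) (hx j).2⟩
  have huzy : u z ≤ u y :=
    hu_mono (fun j => by have := (hz' j).1; linarith)
      (fun j => by have := (hy j).1; linarith)
      (fun j => min_le_right _ _)
  set p : ℕ → Fin d → ℝ := fun m j => if (j:ℕ) < m then z j else x j with hp
  have hp0 : p 0 = x := by funext j; simp [hp]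
  have hpd : p d = z := by funext j; simp [hp, j.isLt]
  have tel : ∑ m ∈ Finset.range d, (u (p m) - u (p (m+1))) = u x - u z := by
    rw [Finset.sum_range_sub' (fun m => u (p m)) d, hp0, hpd]
  have hterm : ∀ m ∈ Finset.range d, u (p m) - u (p (m+1)) ≤ C := by
    intro m hm
    have hmd : m < d := Finset.mem_range.mp hm
    set im : Fin d := ⟨m, hmd⟩ with him
    have hpw : ∀ j, h < p m j ∧ p m j ≤ R := by
      intro j
      by_cases hj : (j:ℕ) < m
      · simpa [hp, hj] using hz' j
      · simpa [hp, hj] using hx j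
    set tm := x im - z im with htm
    have htm0 : 0 ≤ tm := by
      have h1 : z im = min (x im) (y im) := rfl
      have := min_le_left (x im) (y im)
      rw [htm, h1]
      linarith
    have hpmim : p m im = x im := by simp [hp, him]
    have hupd : p (m+1) = Function.update (p m) im (p m im - tm) := by
      funext j
      rcases eq_or_ne j im with rfl | hj
      · rw [Function.update_self, hpmim, htm]
        have h1 : ((im : Fin d) : ℕ) < m + 1 := by simp [him]
        simp only [hp]
        rw [if_pos h1]
        ring
      · rw [Function.update_of_ne hj]
        have hjm : (j:ℕ) ≠ m := fun hcon => hj (Fin.ext (by simp [him, hcon]))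
        have : ((j:ℕ) < m + 1) = ((j:ℕ) < m) := propext (by omega)
        simp only [hp, this]
    have hti' : h < p m im - tm := by
      rw [hpmim, htm]
      have := (hz' im).1
      linarith
    have key := coord_bound hh hR hM hu_mono hbdry hMbound im (p m) hpw tm htm0 hti'
    rw [← hupd] at key
    have htmT : tm ≤ T := by
      have h1 : tm ≤ |x im - y im| := by
        have hzim : z im = min (x im) (y im) := rfl
        rcases le_total (x im) (y im) with hle | hle
        · rw [htm, hzim, min_eq_left hle]
          simp [abs_nonneg]
        · rw [htm, hzim, min_eq_right hle]
          exact le_abs_self _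
      have h2 : |x im - y im| = Real.sqrt ((x im - y im)^2) := (Real.sqrt_sq_eq_abs _).symm
      have h3 : Real.sqrt ((x im - y im)^2) ≤ T := by
        rw [hT]
        apply Real.sqrt_le_sqrt
        exact Finset.single_le_sum (f := fun j => (x j - y j)^2)
          (fun j _ => sq_nonneg _) (Finset.mem_univ im)
      linarith
    have h4 : tm ^ ((1:ℝ)/d) ≤ T ^ ((1:ℝ)/d) :=
      Real.rpow_le_rpow htm0 htmT (by positivity)
    have h5 : 2 * (d:ℝ) * R ^ (((d:ℝ) - 1) / d) * M ^ ((1:ℝ)/d)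
        * (tm ^ ((1:ℝ)/d) + h ^ ((1:ℝ)/d)) ≤ C := by
      rw [hC]
      apply mul_le_mul_of_nonneg_left _ (by positivity)
      linarith
    linarith
  have hsum : u x - u z ≤ (d:ℝ) * C := by
    rw [← tel]
    calc ∑ m ∈ Finset.range d, (u (p m) - u (p (m+1)))
        ≤ ∑ _m ∈ Finset.range d, C := Finset.sum_le_sum hterm
      _ = (d:ℝ) * C := by rw [Finset.sum_const, Finset.card_range, nsmul_eq_mul]
  have hfin : (d:ℝ) * C = 2 * (d : ℝ)^2 * R ^ (((d : ℝ) - 1) / d) * M ^ ((1 : ℝ) / d) *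
      (T ^ ((1 : ℝ) / d) + h ^ ((1 : ℝ) / d)) := by
    rw [hC]; ring
  rw [← hfin]
  linarith

end Aux

/-- Approximate Hölder (1/d) regularity for Pareto-monotone functions vanishing on `Γ_h`. -/
theorem stmt2 {d : ℕ} (h : ℝ) (hh : 0 < h)
    (u : (Fin d → ℝ) → ℝ)
    (hu_mono : MonotoneOn u {x | ∀ i, 0 ≤ x i})
    (hu_loc : ∀ R : ℝ, ∃ M, ∀ x : Fin d → ℝ, (∀ i, 0 ≤ x i ∧ x i ≤ R) → |u x| ≤ M)
    (hbdry : ∀ x : Fin d → ℝ, (∀ i, 0 ≤ x i) → (¬ ∀ i, h < x i) → u x = 0)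
    (R : ℝ) (hR : 0 < R)
    (M : ℝ) (hM : 0 ≤ M)
    (hMbound : ∀ x : Fin d → ℝ, (∀ i, h < x i ∧ x i ≤ R) → |Sh h x u| ≤ M) :
    ∀ x y : Fin d → ℝ, (∀ i, h < x i ∧ x i ≤ R) → (∀ i, h < y i ∧ y i ≤ R) →
      |u x - u y| ≤ 2 * (d : ℝ)^2 * R ^ (((d : ℝ) - 1) / d) * M ^ ((1 : ℝ) / d) *
        ((Real.sqrt (∑ i, (x i - y i)^2)) ^ ((1 : ℝ) / d) + h ^ ((1 : ℝ) / d)) := by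
  intro x y hx hy
  rw [abs_sub_le_iff]
  constructor
  · exact onesided hh hu_mono hbdry hR hM hMbound x y hx hy
  · have h2 := onesided hh hu_mono hbdry hR hM hMbound y x hy hx
    have h3 : ∑ i, (y i - x i)^2 = ∑ i, (x i - y i)^2 :=
      Finset.sum_congr rfl (fun i _ => by ring)
    rw [h3] at h2
    exact h2
end

section
/- Define \psi: \mathbb{R}^d \to \mathbb{R} by \psi(x) = d (x_1 \cdots x_d)^{1/d} for x in the open positive orthant and \psi(x)=0 otherwise. Then for every h>0 and every x \in (h\mathbf{1},\infty), \prod_{i=1}^d (\psi(x) - \psi(x - h e_i))/h \ge 1. -/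
open Finset

/-- The discrete supersolution `ψ(x) = d (x₁ ⋯ x_d)^{1/d}` on the positive orthant. -/
noncomputable def psi {d : ℕ} (x : Fin d → ℝ) : ℝ :=
  if ∀ i, 0 < x i then (d : ℝ) * (∏ i, x i) ^ ((1 : ℝ) / d) else 0

/-- `ψ` is a discrete supersolution of the scheme with right-hand side `1`. -/
theorem stmt3 {d : ℕ} (h : ℝ) (hh : 0 < h) (x : Fin d → ℝ) (hx : ∀ i, h < x i) :
    1 ≤ ∏ i : Fin d, (psi x - psi (Function.update x i (x i - h))) / h := by
  rcases Nat.eq_zero_or_pos d with hd | hd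
  · subst hd; simp
  have hd0 : (d : ℝ) ≠ 0 := Nat.cast_ne_zero.2 hd.ne'
  have hdpos : (0 : ℝ) < d := Nat.cast_pos.2 hd
  have hxpos : ∀ i, 0 < x i := fun i => hh.trans (hx i)
  set P : ℝ := ∏ i, x i with hP
  have hPpos : 0 < P := Finset.prod_pos fun i _ => hxpos i
  have key : ∀ i : Fin d, P ^ ((1:ℝ)/d) / x i ≤
      (psi x - psi (Function.update x i (x i - h))) / h := by
    intro i
    have hxi : 0 < x i := hxpos i
    have hxi' : 0 < x i - h := by linarith [hx i]
    have hupd : ∀ j, 0 < Function.update x i (x i - h) j := by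
      intro j
      rcases eq_or_ne j i with rfl | hj
      · simpa using hxi'
      · simpa [Function.update_of_ne hj] using hxpos j
    have hprod : (∏ j, Function.update x i (x i - h) j) = P * (1 - h / x i) := by
      rw [Finset.prod_update_of_mem (Finset.mem_univ i)]
      rw [hP, ← Finset.prod_erase_mul _ _ (Finset.mem_univ i)]
      rw [Finset.sdiff_singleton_eq_erase] at *
      field_simp
    have hpsix : psi x = (d : ℝ) * P ^ ((1:ℝ)/d) := by
      simp [psi, hxpos, hP]
    have hpsiu : psi (Function.update x i (x i - h)) =
        (d : ℝ) * (P ^ ((1:ℝ)/d) * (1 - h / x i) ^ ((1:ℝ)/d)) := by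
      simp only [psi, if_pos hupd, hprod]
      rw [Real.mul_rpow hPpos.le (by nlinarith [(div_le_one hxi).2 (hx i).le] : (0:ℝ) ≤ 1 - h / x i)]
    have hber : (1 - h / x i) ^ ((1:ℝ)/d) ≤ 1 + (1/d) * (-(h / x i)) := by
      have := rpow_one_add_le_one_add_mul_self (s := -(h / x i))
        (by nlinarith [(div_lt_one hxi).2 (hx i)] : (-1:ℝ) ≤ -(h / x i))
        (p := (1:ℝ)/d) (by positivity) (by
          rw [div_le_one hdpos]; exact_mod_cast hd)
      rw [sub_eq_add_neg]; simpa using this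
    rw [hpsix, hpsiu, div_le_div_iff₀ hxi hh]
    have hPr : 0 < P ^ ((1:ℝ)/d) := Real.rpow_pos_of_pos hPpos _
    have h1 : (d : ℝ) * (P ^ ((1:ℝ)/d) * (1 - h / x i) ^ ((1:ℝ)/d)) ≤
        (d : ℝ) * (P ^ ((1:ℝ)/d) * (1 + (1/d) * (-(h / x i)))) := by
      apply mul_le_mul_of_nonneg_left _ hdpos.le
      exact mul_le_mul_of_nonneg_left hber hPr.le
    have h2 : P ^ ((1:ℝ)/d) * h ≤
        ((d : ℝ) * P ^ ((1:ℝ)/d) - (d : ℝ) * (P ^ ((1:ℝ)/d) * (1 + (1/d) * (-(h / x i))))) * x i := by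
      have : ((d : ℝ) * P ^ ((1:ℝ)/d) - (d : ℝ) * (P ^ ((1:ℝ)/d) * (1 + (1/d) * (-(h / x i))))) * x i
          = P ^ ((1:ℝ)/d) * h := by
        field_simp [hxi.ne']
        ring
      linarith [this]
    nlinarith [h1, h2, hxi]
  have hnn : ∀ i : Fin d, (0:ℝ) ≤ P ^ ((1:ℝ)/d) / x i := fun i => div_nonneg (Real.rpow_pos_of_pos hPpos _).le (hxpos i).le
  calc (1:ℝ) = ∏ i : Fin d, P ^ ((1:ℝ)/d) / x i := by
        rw [Finset.prod_div_distrib, Finset.prod_const, ← hP, Finset.card_univ, Fintype.card_fin,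
          ← Real.rpow_natCast (P ^ ((1:ℝ)/d)) d, ← Real.rpow_mul hPpos.le]
        field_simp
        simp
    _ ≤ _ := Finset.prod_le_prod (fun i _ => hnn i) (fun i _ => key i)
end

section
/- Let f(x) = f_1(x_1) \cdots f_d(x_d) be a separable nonnegative continuous density on the positive orthant, with each f_i continuous. Then U(x) = d \left( \int_{[0,x]} f(y)\,dy \right)^{1/d} satisfies U_{x_1} \cdots U_{x_d} = f at every point x in the open positive orthant where all the one-dimensional integrals \int_0^{x_i} f_i are positive, and U = 0 on the boundary of the orthant. -/
open Finset

/-- For a separable density `f(x) = f₁(x₁)⋯f_d(x_d)`, the function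
`U(x) = d (∫_{[0,x]} f)^{1/d} = d (∏ᵢ ∫₀^{xᵢ} fᵢ)^{1/d}` is a classical solution of
`U_{x₁} ⋯ U_{x_d} = f` at points of the open positive orthant where all the
one-dimensional integrals are positive, and `U = 0` on the boundary of the orthant. -/
theorem stmt8 {d : ℕ} (hd : 0 < d) (fi : Fin d → ℝ → ℝ)
    (hcont : ∀ i, Continuous (fi i)) (hnonneg : ∀ i t, 0 ≤ fi i t)
    (U : (Fin d → ℝ) → ℝ)
    (hU : ∀ x, U x = (d : ℝ) * (∏ i, ∫ t in (0:ℝ)..(x i), fi i t) ^ ((1 : ℝ) / d)) :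
    (∀ x : Fin d → ℝ, (∀ i, 0 < x i) → (∀ i, 0 < ∫ t in (0:ℝ)..(x i), fi i t) →
      ∃ g : Fin d → ℝ,
        (∀ i, HasDerivAt (fun t : ℝ => U (Function.update x i t)) (g i) (x i)) ∧
        ∏ i, g i = ∏ i, fi i (x i)) ∧
    (∀ x : Fin d → ℝ, (∀ i, 0 ≤ x i) → (∃ i, x i = 0) → U x = 0) := by
  have hd' : (d : ℝ) ≠ 0 := Nat.cast_ne_zero.mpr hd.ne'
  constructor
  · intro x hx hpos
    set F : Fin d → ℝ := fun i => ∫ t in (0:ℝ)..(x i), fi i t with hFdef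
    have hFpos : ∀ i, 0 < F i := hpos
    set P : ℝ := ∏ i, F i with hPdef
    have hP : 0 < P := Finset.prod_pos (fun i _ => hFpos i)
    refine ⟨fun i => fi i (x i) * (∏ j ∈ Finset.univ.erase i, F j) * P ^ ((1:ℝ)/d - 1),
      ?_, ?_⟩
    · intro i
      set C : ℝ := ∏ j ∈ Finset.univ.erase i, F j with hCdef
      have hval : (∫ s in (0:ℝ)..(x i), fi i s) * C = P := by
        rw [hPdef, ← Finset.mul_prod_erase Finset.univ F (Finset.mem_univ i)]
      have hfun : (fun t : ℝ => U (Function.update x i t)) =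
          fun t => (d:ℝ) * ((∫ s in (0:ℝ)..t, fi i s) * C) ^ ((1:ℝ)/d) := by
        funext t
        rw [hU]
        have h2 : ∏ j ∈ Finset.univ.erase i,
            (∫ s in (0:ℝ)..(Function.update x i t j), fi j s) = C :=
          Finset.prod_congr rfl fun j hj => by
            rw [Function.update_of_ne (Finset.ne_of_mem_erase hj)]
        rw [← Finset.mul_prod_erase Finset.univ _ (Finset.mem_univ i), h2,
          Function.update_self]
      rw [hfun]
      have hG : HasDerivAt (fun t : ℝ => ∫ s in (0:ℝ)..t, fi i s) (fi i (x i)) (x i) :=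
        intervalIntegral.integral_hasDerivAt_right ((hcont i).intervalIntegrable _ _)
          ((hcont i).stronglyMeasurable.stronglyMeasurableAtFilter)
          (hcont i).continuousAt
      have hGC : HasDerivAt (fun t : ℝ => (∫ s in (0:ℝ)..t, fi i s) * C)
          (fi i (x i) * C) (x i) := hG.mul_const _
      have hr := (hGC.rpow_const (p := (1:ℝ)/d) (Or.inl (by rw [hval]; exact hP.ne'))).const_mul (d:ℝ)
      refine hr.congr_deriv ?_
      rw [hval]
      field_simp
      rw [hCdef]
    · have hCF : ∀ i : Fin d, (∏ j ∈ Finset.univ.erase i, F j) * F i = P := by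
        intro i
        rw [hPdef, mul_comm, ← Finset.mul_prod_erase Finset.univ F (Finset.mem_univ i)]
      have hQ : (∏ i, ∏ j ∈ Finset.univ.erase i, F j) * P = P ^ d := by
        calc (∏ i, ∏ j ∈ Finset.univ.erase i, F j) * P
            = ∏ i, ((∏ j ∈ Finset.univ.erase i, F j) * F i) := by
              rw [Finset.prod_mul_distrib, hPdef]
          _ = ∏ _i : Fin d, P := Finset.prod_congr rfl (fun i _ => hCF i)
          _ = P ^ d := by rw [Finset.prod_const, Finset.card_univ, Fintype.card_fin]
      have hpow : (P ^ ((1:ℝ)/d - 1)) ^ d = P / P ^ d := by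
        rw [← Real.rpow_natCast (P ^ ((1:ℝ)/d - 1)) d, ← Real.rpow_mul hP.le]
        have : ((1:ℝ)/d - 1) * d = 1 - d := by field_simp
        rw [this, Real.rpow_sub hP, Real.rpow_one, Real.rpow_natCast]
      rw [Finset.prod_mul_distrib, Finset.prod_mul_distrib, Finset.prod_const,
        Finset.card_univ, Fintype.card_fin, hpow]
      have hQ' : (∏ i, ∏ j ∈ Finset.univ.erase i, F j) = P ^ d / P := by
        field_simp [hP.ne'] at hQ ⊢
        linarith [hQ]
      rw [hQ']
      field_simp
  · rintro x hx ⟨i, hi⟩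
    rw [hU]
    have h0 : ∫ t in (0:ℝ)..(x i), fi i t = 0 := by rw [hi, intervalIntegral.integral_same]
    rw [Finset.prod_eq_zero (Finset.mem_univ i) h0,
      Real.zero_rpow (one_div_ne_zero hd'), mul_zero]
end

section
/- For d \ge 1 define U_4(x) = d \left( \prod_{i=1}^d x_i \cdot \sum_{i=1}^d x_i^9 \right)^{1/d} on the open positive orthant. Then (U_4)_{x_1} \cdots (U_4)_{x_d} = \left( \sum_{i=1}^d x_i^9 \right)^{1-d} \prod_{j=1}^d \left( 9 x_j^9 + \sum_{i=1}^d x_i^9 \right) at every point of the open positive orthant. -/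
open Finset

/-- `U₄(x) = d(∏ᵢ xᵢ ⋅ ∑ᵢ xᵢ⁹)^{1/d}` solves
`(U₄)_{x₁}⋯(U₄)_{x_d} = (∑ᵢ xᵢ⁹)^{1-d} ∏ⱼ (9xⱼ⁹ + ∑ᵢ xᵢ⁹)` on the open positive orthant. -/
theorem stmt11 {d : ℕ} (hd : 1 ≤ d) (U : (Fin d → ℝ) → ℝ)
    (hU : ∀ x, U x = (d : ℝ) * ((∏ i, x i) * ∑ i, (x i) ^ 9) ^ ((1 : ℝ) / d)) :
    ∀ x : Fin d → ℝ, (∀ i, 0 < x i) →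
      ∃ g : Fin d → ℝ,
        (∀ i, HasDerivAt (fun t : ℝ => U (Function.update x i t)) (g i) (x i)) ∧
        ∏ i, g i = (∑ i, (x i) ^ 9) ^ ((1 : ℝ) - d) *
          ∏ j, (9 * (x j) ^ 9 + ∑ i, (x i) ^ 9) := by
  intro x hx
  have hdR : (d : ℝ) ≠ 0 := Nat.cast_ne_zero.mpr (by omega)
  set P : ℝ := ∏ i, x i with hPdef
  set S : ℝ := ∑ i, (x i) ^ 9 with hSdef
  have hP : 0 < P := Finset.prod_pos fun i _ => hx i
  have hne : Nonempty (Fin d) := ⟨⟨0, hd⟩⟩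
  have hS : 0 < S := Finset.sum_pos (fun i _ => pow_pos (hx i) 9) Finset.univ_nonempty
  set c : Fin d → ℝ := fun i => ∏ k ∈ Finset.univ.erase i, x k with hcdef
  set s : Fin d → ℝ := fun i => ∑ k ∈ Finset.univ.erase i, (x k) ^ 9 with hsdef
  have hPi : ∀ i, x i * c i = P := fun i => Finset.mul_prod_erase _ _ (mem_univ i)
  have hSi : ∀ i, (x i) ^ 9 + s i = S := fun i => Finset.add_sum_erase _ (fun k => x k ^ 9) (mem_univ i)
  have hcpos : ∀ i, 0 < c i := fun i => Finset.prod_pos fun j _ => hx j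
  have hspos : ∀ i, 0 ≤ s i := fun i => Finset.sum_nonneg fun j _ =>
    (pow_pos (hx j) 9).le
  refine ⟨fun i => (d : ℝ) *
      ((c i * S + P * (9 * x i ^ 8)) * ((1:ℝ)/d) * (P * S) ^ ((1:ℝ)/d - 1)), ?_, ?_⟩
  · intro i
    simp only [hU]
    have hfun : (fun t : ℝ => (d:ℝ) * ((∏ k, Function.update x i t k) *
        ∑ k, Function.update x i t k ^ 9) ^ ((1:ℝ)/d)) =
        fun t : ℝ => (d:ℝ) * ((t * c i) * (t ^ 9 + s i)) ^ ((1:ℝ)/d) := by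
      funext t
      have h1 : (∏ k, Function.update x i t k) = t * c i := by
        rw [Finset.prod_update_of_mem (mem_univ i), Finset.sdiff_singleton_eq_erase]
      have h2 : (∑ k, Function.update x i t k ^ 9) = t ^ 9 + s i := by
        have : ∀ k, Function.update x i t k ^ 9 =
            Function.update (fun k => x k ^ 9) i (t ^ 9) k := fun k =>
          Function.apply_update (fun _ v => v ^ 9) x i t k
        simp only [this]
        rw [Finset.sum_update_of_mem (mem_univ i), Finset.sdiff_singleton_eq_erase]
      rw [h1, h2]
    rw [hfun]
    have hA : HasDerivAt (fun t : ℝ => (t * c i) * (t ^ 9 + s i))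
        (c i * (x i ^ 9 + s i) + (x i * c i) * (9 * x i ^ 8)) (x i) := by
      have h1 : HasDerivAt (fun t : ℝ => t * c i) (c i) (x i) := by
        simpa using (hasDerivAt_id (x i)).mul_const (c i)
      have h2 : HasDerivAt (fun t : ℝ => t ^ 9 + s i) (9 * x i ^ 8) (x i) := by
        simpa using (hasDerivAt_pow 9 (x i)).add_const (s i)
      exact h1.mul h2
    have hbase : (x i * c i) * (x i ^ 9 + s i) ≠ 0 := by
      have : (0:ℝ) < (x i * c i) * (x i ^ 9 + s i) := by
        have := hx i; have := hcpos i; have := hspos i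
        positivity
      exact this.ne'
    have hD := (hA.rpow_const (p := (1:ℝ)/d) (Or.inl hbase)).const_mul (d:ℝ)
    rw [hSi i, hPi i] at hD
    exact hD
  · have hT : ∀ i, (d : ℝ) *
        ((c i * S + P * (9 * x i ^ 8)) * ((1:ℝ)/d) * (P * S) ^ ((1:ℝ)/d - 1)) =
        (c i * (9 * x i ^ 9 + S)) * (P * S) ^ ((1:ℝ)/d - 1) := by
      intro i
      rw [← hPi i]
      have hA : (c i * S + (x i * c i) * (9 * x i ^ 8)) = c i * (9 * x i ^ 9 + S) := by
        ring
      rw [hA]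
      rw [show (d:ℝ) * (c i * (9 * x i ^ 9 + S) * ((1:ℝ)/d) *
          ((x i * c i) * S) ^ ((1:ℝ)/d - 1)) =
          c i * (9 * x i ^ 9 + S) * ((x i * c i) * S) ^ ((1:ℝ)/d - 1) *
          ((d:ℝ) * (1/d)) from by ring, mul_one_div_cancel hdR, mul_one]
    simp only [hT]
    rw [Finset.prod_mul_distrib, Finset.prod_const]
    have hcard : (Finset.univ : Finset (Fin d)).card = d := by simp
    rw [hcard]
    have hTd : ((P * S) ^ ((1:ℝ)/d - 1)) ^ d = (P * S) ^ ((1:ℝ) - d) := by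
      rw [← Real.rpow_natCast ((P * S) ^ ((1:ℝ)/d - 1)) d,
        ← Real.rpow_mul (by positivity)]
      congr 1
      field_simp
    rw [hTd]
    have hcprod : ∏ i, (c i * (9 * x i ^ 9 + S)) =
        P ^ (d - 1) * ∏ j, (9 * x j ^ 9 + S) := by
      rw [Finset.prod_mul_distrib]
      congr 1
      have h1 : P * ∏ i, c i = P ^ d := by
        rw [hPdef, ← Finset.prod_mul_distrib]
        have : ∀ i ∈ Finset.univ, x i * c i = P := fun i _ => hPi i
        rw [Finset.prod_congr rfl this, Finset.prod_const, hcard]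
      have h2 : P ^ d = P * P ^ (d - 1) := by
        rw [← pow_succ']
        congr 1
        omega
      have := h1.trans h2
      exact mul_left_cancel₀ hP.ne' this
    rw [hcprod]
    have hfinal : P ^ (d - 1) * (P * S) ^ ((1:ℝ) - d) = S ^ ((1:ℝ) - d) := by
      rw [Real.mul_rpow hP.le hS.le]
      have hnat : (P : ℝ) ^ (d - 1) = P ^ ((d : ℝ) - 1) := by
        rw [← Real.rpow_natCast P (d - 1)]
        congr 1
        push_cast [Nat.cast_sub hd]
        ring
      rw [hnat, ← mul_assoc, ← Real.rpow_add hP]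
      norm_num
    calc P ^ (d - 1) * (∏ j, (9 * x j ^ 9 + S)) * (P * S) ^ ((1:ℝ) - d)
        = (P ^ (d - 1) * (P * S) ^ ((1:ℝ) - d)) * ∏ j, (9 * x j ^ 9 + S) := by ring
      _ = S ^ ((1:ℝ) - d) * ∏ j, (9 * x j ^ 9 + S) := by rw [hfinal]
end
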